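/- Let (H, ‖·‖) be a separable Hilbert space endowed with a probability measure ℙ, and let Z, Z' be H-valued random variables with 𝔼‖Z‖² + 𝔼‖Z'‖² < ∞. Let B, B' be the uncentered covariance operators B : u ↦ 𝔼[⟨u, Z⟩ Z] and B' : u ↦ 𝔼[⟨u, Z'⟩ Z']. Then B and B' are trace class and ‖B − B'‖₁ ≤ (𝔼‖Z − Z'‖²)^{1/2} · ((𝔼‖Z‖²)^{1/2} + (𝔼‖Z'‖²)^{1/2}), where ‖·‖₁ denotes the trace norm. -/

import Mathlib

open scoped InnerProductSpace RealInnerProductSpace ENNReal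
open MeasureTheory

/-- The `n`-th singular value of an operator `A`, following Allahverdiev's
characterization: `σ_n(A) := inf {‖A - L‖ : L compact, rank L ≤ n - 1}`. -/
noncomputable def sval {H : Type*} [NormedAddCommGroup H] [InnerProductSpace ℝ H]
    (A : H →L[ℝ] H) (n : ℕ) : ℝ :=
  sInf {r : ℝ | ∃ L : H →L[ℝ] H, IsCompactOperator L ∧
    Module.rank ℝ (LinearMap.range (L : H →ₗ[ℝ] H)) ≤ ((n - 1 : ℕ) : Cardinal) ∧ r = ‖A - L‖}

/-- The trace norm `‖A‖₁ = Σ_{i=1}^∞ σ_i(A)`, valued in `ℝ≥0∞`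
(`A` is trace class iff this is finite). -/
noncomputable def traceNorm {H : Type*} [NormedAddCommGroup H] [InnerProductSpace ℝ H]
    (A : H →L[ℝ] H) : ℝ≥0∞ := ∑' i : ℕ, ENNReal.ofReal (sval A (i + 1))

section Aux
variable {H : Type*} [NormedAddCommGroup H] [InnerProductSpace ℝ H]

/-- rank one operator `x ↦ ⟪u, x⟫ • v`. -/
noncomputable def rkOne (u v : H) : H →L[ℝ] H := (innerSL ℝ u).smulRight v

@[simp] lemma rkOne_apply (u v x : H) : rkOne u v x = ⟪u, x⟫_ℝ • v := rfl

lemma isCompactOperator_rkOne (u v : H) : IsCompactOperator (rkOne u v) := by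
  refine ⟨(fun t : ℝ => t • v) '' Set.Icc (-(‖u‖+1)) (‖u‖+1),
    (isCompact_Icc).image (by fun_prop), ?_⟩
  have : Metric.ball (0:H) 1 ⊆ (rkOne u v) ⁻¹' ((fun t : ℝ => t • v) '' Set.Icc (-(‖u‖+1)) (‖u‖+1)) := by
    intro x hx
    simp only [Metric.mem_ball, dist_zero_right] at hx
    refine ⟨⟪u, x⟫_ℝ, ?_, rfl⟩
    have h1 : |⟪u, x⟫_ℝ| ≤ ‖u‖ * ‖x‖ := abs_real_inner_le_norm u x
    have h2 : ‖u‖ * ‖x‖ ≤ ‖u‖ + 1 := by nlinarith [norm_nonneg u, norm_nonneg x]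
    rw [Set.mem_Icc, ← abs_le]
    linarith
  exact Filter.mem_of_superset (Metric.ball_mem_nhds 0 one_pos) this

lemma range_rkOne_le (u v : H) :
    LinearMap.range (rkOne u v : H →ₗ[ℝ] H) ≤ Submodule.span ℝ {v} := by
  rintro x ⟨y, rfl⟩
  exact Submodule.smul_mem _ _ (Submodule.mem_span_singleton_self v)

end Aux

section Eigen
variable {H : Type*} [NormedAddCommGroup H] [InnerProductSpace ℝ H]

lemma opNorm_le_of_symmetric {T : H →L[ℝ] H}
    (hT : ∀ x y : H, ⟪T x, y⟫_ℝ = ⟪x, T y⟫_ℝ) {M : ℝ} (hM : 0 ≤ M)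
    (h : ∀ z : H, |⟪T z, z⟫_ℝ| ≤ M * ‖z‖ ^ 2) : ‖T‖ ≤ M := by
  refine ContinuousLinearMap.opNorm_le_bound T hM (fun x => ?_)
  rcases eq_or_ne (T x) 0 with h0 | h0
  · simp [h0, mul_nonneg hM (norm_nonneg x)]
  rcases eq_or_ne x 0 with rfl | hx0
  · simp at h0
  set y : H := (‖x‖ / ‖T x‖) • T x with hy
  have hyn : ‖y‖ = ‖x‖ := by
    rw [hy, norm_smul, norm_div, Real.norm_eq_abs, Real.norm_eq_abs,
      abs_of_nonneg (norm_nonneg x), abs_of_nonneg (norm_nonneg (T x)),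
      div_mul_cancel₀ _ (norm_ne_zero_iff.2 h0)]
  have key : 4 * ⟪T x, y⟫_ℝ = ⟪T (x + y), x + y⟫_ℝ - ⟪T (x - y), x - y⟫_ℝ := by
    have h1 : ⟪T y, x⟫_ℝ = ⟪T x, y⟫_ℝ := by
      rw [hT y x, real_inner_comm]
    simp only [map_add, map_sub, inner_add_add_self, inner_sub_sub_self,
      inner_add_left, inner_add_right, inner_sub_left, inner_sub_right]
    ring_nf
    linarith [h1]
  have hb : ⟪T (x + y), x + y⟫_ℝ - ⟪T (x - y), x - y⟫_ℝ ≤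
      M * ‖x + y‖ ^ 2 + M * ‖x - y‖ ^ 2 := by
    have h1 := (abs_le.1 (h (x + y))).2
    have h2 := (abs_le.1 (h (x - y))).1
    linarith
  have hpar : ‖x + y‖ ^ 2 + ‖x - y‖ ^ 2 = 2 * (‖x‖ ^ 2 + ‖y‖ ^ 2) := by
    have := parallelogram_law_with_norm ℝ x y
    nlinarith [this]
  have hxy : ⟪T x, y⟫_ℝ = ‖x‖ / ‖T x‖ * ‖T x‖ ^ 2 := by
    rw [hy, real_inner_smul_right, real_inner_self_eq_norm_sq]
  have hTxpos : (0:ℝ) < ‖T x‖ := norm_pos_iff.2 h0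
  have hfin : 4 * (‖x‖ / ‖T x‖ * ‖T x‖ ^ 2) ≤ 4 * (M * ‖x‖ ^ 2) := by
    rw [← hxy]
    calc 4 * ⟪T x, y⟫_ℝ ≤ M * ‖x + y‖ ^ 2 + M * ‖x - y‖ ^ 2 := by rw [key]; exact hb
    _ = M * (‖x + y‖ ^ 2 + ‖x - y‖ ^ 2) := by ring
    _ = M * (2 * (‖x‖ ^ 2 + ‖y‖ ^ 2)) := by rw [hpar]
    _ = 4 * (M * ‖x‖ ^ 2) := by rw [hyn]; ring
  have : ‖x‖ / ‖T x‖ * ‖T x‖ ^ 2 = ‖x‖ * ‖T x‖ := by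
    field_simp
  rw [this] at hfin
  have hxpos : (0:ℝ) < ‖x‖ := norm_pos_iff.2 hx0
  nlinarith

end Eigen

section Eigen2
variable {H : Type*} [NormedAddCommGroup H] [InnerProductSpace ℝ H]

lemma exists_eigen_of_compact_symmetric {T : H →L[ℝ] H}
    (hTc : IsCompactOperator T)
    (hT : ∀ x y : H, ⟪T x, y⟫_ℝ = ⟪x, T y⟫_ℝ) (hT0 : T ≠ 0) :
    ∃ (l : ℝ) (u : H), |l| = ‖T‖ ∧ ‖u‖ = 1 ∧ T u = l • u := by
  classical
  -- the set of quadratic form values on the sphere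
  set S : Set ℝ := {r : ℝ | ∃ x : H, ‖x‖ = 1 ∧ r = |⟪T x, x⟫_ℝ|} with hS
  obtain ⟨x₀, hx₀⟩ : ∃ x : H, T x ≠ 0 := by
    by_contra hc
    push_neg at hc
    exact hT0 (ContinuousLinearMap.ext fun x => by simp [hc x])
  have hx₀0 : x₀ ≠ 0 := fun h => hx₀ (by simp [h])
  have hunit : ∃ x : H, ‖x‖ = (1:ℝ) := by
    refine ⟨(‖x₀‖)⁻¹ • x₀, ?_⟩
    rw [norm_smul, Real.norm_eq_abs, abs_of_nonneg (by positivity),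
      inv_mul_cancel₀ (norm_ne_zero_iff.2 hx₀0)]
  have hne : S.Nonempty := by
    obtain ⟨x, hx⟩ := hunit
    exact ⟨|⟪T x, x⟫_ℝ|, x, hx, rfl⟩
  have hbdd : BddAbove S := by
    refine ⟨‖T‖, ?_⟩
    rintro r ⟨x, hx, rfl⟩
    calc |⟪T x, x⟫_ℝ| ≤ ‖T x‖ * ‖x‖ := abs_real_inner_le_norm _ _
    _ ≤ ‖T‖ * ‖x‖ * ‖x‖ := by
        have := T.le_opNorm x
        nlinarith [norm_nonneg x]
    _ = ‖T‖ := by rw [hx]; ring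
  set M : ℝ := sSup S with hM
  have hM0 : 0 ≤ M := by
    obtain ⟨x, hx⟩ := hunit
    exact le_trans (abs_nonneg _) (le_csSup hbdd ⟨x, hx, rfl⟩)
  have hMle : ‖T‖ ≤ M := by
    refine opNorm_le_of_symmetric hT hM0 (fun z => ?_)
    rcases eq_or_ne z 0 with rfl | hz
    · simp
    have hzpos : (0:ℝ) < ‖z‖ := norm_pos_iff.2 hz
    have hmem : |⟪T ((‖z‖)⁻¹ • z), (‖z‖)⁻¹ • z⟫_ℝ| ∈ S := by
      refine ⟨(‖z‖)⁻¹ • z, ?_, rfl⟩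
      rw [norm_smul, Real.norm_eq_abs, abs_of_nonneg (by positivity),
        inv_mul_cancel₀ hzpos.ne']
    have hval : |⟪T ((‖z‖)⁻¹ • z), (‖z‖)⁻¹ • z⟫_ℝ| = |⟪T z, z⟫_ℝ| / ‖z‖ ^ 2 := by
      rw [T.map_smul, real_inner_smul_left, real_inner_smul_right,
        abs_mul, abs_mul, abs_inv, abs_of_nonneg (norm_nonneg z), sq]
      rw [div_eq_mul_inv, mul_inv]
      ring
    have := le_csSup hbdd hmem
    rw [hval] at this
    calc |⟪T z, z⟫_ℝ| = |⟪T z, z⟫_ℝ| / ‖z‖ ^ 2 * ‖z‖ ^ 2 := by field_simp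
    _ ≤ M * ‖z‖ ^ 2 := by nlinarith [sq_nonneg ‖z‖]
  have hMge : M ≤ ‖T‖ := csSup_le hne (by rintro r ⟨x, hx, rfl⟩
                                          calc |⟪T x, x⟫_ℝ| ≤ ‖T x‖ * ‖x‖ := abs_real_inner_le_norm _ _
                                          _ ≤ ‖T‖ * ‖x‖ * ‖x‖ := by
                                              have := T.le_opNorm x
                                              nlinarith [norm_nonneg x]
                                          _ = ‖T‖ := by rw [hx]; ring)
  have hMeq : M = ‖T‖ := le_antisymm hMge hMle
  have hMpos : 0 < M := by
    rw [hMeq]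
    exact norm_pos_iff.2 hT0
  -- choose an approximating sequence on the sphere
  have hseq : ∀ n : ℕ, ∃ x : H, ‖x‖ = 1 ∧ M - 1 / (n + 1) < |⟪T x, x⟫_ℝ| := by
    intro n
    have h1 : M - 1 / (n + 1) < M := by
      have : (0:ℝ) < 1 / (n + 1) := by positivity
      linarith
    obtain ⟨r, hr, hlt⟩ := exists_lt_of_lt_csSup hne h1
    obtain ⟨x, hx, rfl⟩ := hr
    exact ⟨x, hx, hlt⟩
  choose x hx1 hx2 using hseq
  set t : ℕ → ℝ := fun n => ⟪T (x n), x n⟫_ℝ with ht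
  have htabs : ∀ n, |t n| ≤ M := fun n => le_csSup hbdd ⟨x n, hx1 n, rfl⟩
  have htb : ∀ n, t n ∈ Set.Icc (-M) M := fun n => abs_le.1 (htabs n)
  obtain ⟨l, -, φ, hφmono, hφt⟩ :=
    tendsto_subseq_of_bounded (Metric.isBounded_Icc (-M) M) htb
  -- |t n| tends to M
  have habs_tendsto : Filter.Tendsto (fun n => |t n|) Filter.atTop (nhds M) := by
    have hlow : Filter.Tendsto (fun n : ℕ => M - 1 / (n + 1)) Filter.atTop (nhds M) := by
      have : Filter.Tendsto (fun n : ℕ => 1 / ((n:ℝ) + 1)) Filter.atTop (nhds 0) :=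
        tendsto_one_div_add_atTop_nhds_zero_nat
      simpa using Filter.Tendsto.sub tendsto_const_nhds this
    refine tendsto_of_tendsto_of_tendsto_of_le_of_le hlow tendsto_const_nhds
      (fun n => (hx2 n).le) (fun n => htabs n)
  have hlabs : |l| = M := by
    have h1 : Filter.Tendsto (fun n => |t (φ n)|) Filter.atTop (nhds |l|) :=
      (continuous_abs.tendsto l).comp hφt
    have h2 : Filter.Tendsto (fun n => |t (φ n)|) Filter.atTop (nhds M) :=
      habs_tendsto.comp hφmono.tendsto_atTop
    exact tendsto_nhds_unique h1 h2
  have hl0 : l ≠ 0 := fun h => by rw [h, abs_zero] at hlabs; exact hMpos.ne hlabs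
  -- ‖T x_n − t_n x_n‖² ≤ M² − t_n²
  have hdef : ∀ n, ‖T (x n) - t n • x n‖ ^ 2 ≤ M ^ 2 - t n ^ 2 := by
    intro n
    have hexp : ‖T (x n) - t n • x n‖ ^ 2
        = ‖T (x n)‖ ^ 2 - 2 * t n * ⟪T (x n), x n⟫_ℝ + t n ^ 2 * ‖x n‖ ^ 2 := by
      rw [norm_sub_sq_real, real_inner_smul_right, norm_smul, Real.norm_eq_abs,
        mul_pow, sq_abs]
      ring
    have hTn : ‖T (x n)‖ ≤ M := by
      calc ‖T (x n)‖ ≤ ‖T‖ * ‖x n‖ := T.le_opNorm _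
      _ = M := by rw [hx1 n, hMeq]; ring
    have h2 : ‖T (x n)‖ ^ 2 ≤ M ^ 2 := by nlinarith [norm_nonneg (T (x n))]
    rw [hexp, hx1 n]
    simp only [ht]
    nlinarith
  -- the deflect tends to 0 along φ
  have hdefl : Filter.Tendsto (fun n => T (x (φ n)) - l • x (φ n)) Filter.atTop (nhds 0) := by
    rw [tendsto_iff_norm_sub_tendsto_zero]
    simp only [sub_zero]
    have hkey : ∀ n, ‖T (x (φ n)) - l • x (φ n)‖
        ≤ Real.sqrt (M ^ 2 - t (φ n) ^ 2) + |t (φ n) - l| := by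
      intro n
      have h1 : ‖T (x (φ n)) - l • x (φ n)‖
          ≤ ‖T (x (φ n)) - t (φ n) • x (φ n)‖ + ‖(t (φ n) - l) • x (φ n)‖ := by
        refine le_trans (le_of_eq (by congr 1; module)) (norm_add_le _ _)
      have h2 : ‖T (x (φ n)) - t (φ n) • x (φ n)‖ ≤ Real.sqrt (M ^ 2 - t (φ n) ^ 2) := by
        have := hdef (φ n)
        have h3 : ‖T (x (φ n)) - t (φ n) • x (φ n)‖
            = Real.sqrt (‖T (x (φ n)) - t (φ n) • x (φ n)‖ ^ 2) :=
          (Real.sqrt_sq (norm_nonneg _)).symm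
        rw [h3]
        exact Real.sqrt_le_sqrt this
      have h4 : ‖(t (φ n) - l) • x (φ n)‖ = |t (φ n) - l| := by
        rw [norm_smul, Real.norm_eq_abs, hx1 (φ n), mul_one]
      linarith
    have htend : Filter.Tendsto (fun n => Real.sqrt (M ^ 2 - t (φ n) ^ 2) + |t (φ n) - l|)
        Filter.atTop (nhds 0) := by
      have h1 : Filter.Tendsto (fun n => M ^ 2 - t (φ n) ^ 2) Filter.atTop (nhds 0) := by
        have := hφt
        have h2 : Filter.Tendsto (fun n => t (φ n) ^ 2) Filter.atTop (nhds (l ^ 2)) :=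
          (continuous_pow 2).continuousAt.tendsto.comp hφt
        have h3 : M ^ 2 = l ^ 2 := by rw [← hlabs, sq_abs]
        have := Filter.Tendsto.sub (tendsto_const_nhds (x := M ^ 2) (f := Filter.atTop (α := ℕ))) h2
        rw [h3] at this ⊢
        simpa using this
      have hsq : Filter.Tendsto (fun n => Real.sqrt (M ^ 2 - t (φ n) ^ 2)) Filter.atTop (nhds 0) := by
        have := (Real.continuous_sqrt.tendsto 0).comp h1
        simpa [Function.comp_def] using this
      have habs2 : Filter.Tendsto (fun n => |t (φ n) - l|) Filter.atTop (nhds 0) := by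
        have h5 : Filter.Tendsto (fun n => t (φ n) - l) Filter.atTop (nhds 0) := by
          simpa using hφt.sub (tendsto_const_nhds (x := l))
        simpa [Function.comp_def] using (continuous_abs.tendsto 0).comp h5
      simpa using hsq.add habs2
    exact squeeze_zero (fun n => norm_nonneg _) hkey htend
  -- compactness: extract convergent subsequence of T x (φ n)
  obtain ⟨K, hK, hKmem⟩ := hTc
  obtain ⟨δ, hδpos, hδ⟩ := Metric.mem_nhds_iff.1 hKmem
  have hmemK : ∀ n, T ((δ/2) • x (φ n)) ∈ K := by
    intro n
    apply hδ
    simp only [Metric.mem_ball, dist_zero_right, norm_smul, Real.norm_eq_abs, hx1 (φ n), mul_one]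
    rw [abs_of_pos (by positivity)]
    linarith
  obtain ⟨v, -, ψ, hψmono, hψt⟩ := hK.tendsto_subseq hmemK
  -- convert: T x (φ (ψ n)) → (2/δ) • v
  have hTx : Filter.Tendsto (fun n => T (x (φ (ψ n)))) Filter.atTop (nhds ((2/δ) • v)) := by
    have h1 : ∀ n, T (x (φ (ψ n))) = (2/δ) • T ((δ/2) • x (φ (ψ n))) := by
      intro n
      have hone : (2/δ) * (δ/2) = 1 := by field_simp
      rw [T.map_smul, smul_smul, hone, one_smul]
    simp only [h1]
    exact (continuous_const_smul ((2:ℝ)/δ)).continuousAt.tendsto.comp hψt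
  set w : H := (2/δ) • v with hw
  have hxconv : Filter.Tendsto (fun n => x (φ (ψ n))) Filter.atTop (nhds (l⁻¹ • w)) := by
    have h1 : Filter.Tendsto (fun n => T (x (φ (ψ n))) - (T (x (φ (ψ n))) - l • x (φ (ψ n))))
        Filter.atTop (nhds (w - 0)) := hTx.sub (hdefl.comp hψmono.tendsto_atTop)
    have h2 : ∀ n, l⁻¹ • (T (x (φ (ψ n))) - (T (x (φ (ψ n))) - l • x (φ (ψ n)))) = x (φ (ψ n)) := by
      intro n
      simp only [sub_sub_cancel, smul_smul, inv_mul_cancel₀ hl0, one_smul]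
    have h3 := (continuous_const_smul (l⁻¹)).continuousAt.tendsto.comp h1
    rw [sub_zero] at h1
    refine (Filter.Tendsto.congr (fun n => h2 n) ?_)
    exact (continuous_const_smul (l⁻¹)).continuousAt.tendsto.comp h1
  set u : H := l⁻¹ • w with hu
  refine ⟨l, u, by rw [hlabs, hMeq], ?_, ?_⟩
  · have h1 : Filter.Tendsto (fun n => ‖x (φ (ψ n))‖) Filter.atTop (nhds ‖u‖) :=
      (continuous_norm.tendsto _).comp hxconv
    simp only [hx1] at h1
    exact (tendsto_nhds_unique tendsto_const_nhds h1).symm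
  · have h1 : Filter.Tendsto (fun n => T (x (φ (ψ n)))) Filter.atTop (nhds (T u)) :=
      (T.continuous.tendsto _).comp hxconv
    have h2 : T u = w := tendsto_nhds_unique h1 hTx
    rw [h2, hu, smul_smul, mul_inv_cancel₀ hl0, one_smul]

end Eigen2

section Spectral
variable {H : Type*} [NormedAddCommGroup H] [InnerProductSpace ℝ H]

lemma isCompactOperator_finsetSum {ι : Type*} (s : Finset ι) (f : ι → H →L[ℝ] H)
    (h : ∀ i ∈ s, IsCompactOperator (f i)) :
    IsCompactOperator (((∑ i ∈ s, f i) : H →L[ℝ] H) : H → H) := by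
  classical
  induction s using Finset.cons_induction with
  | empty => simpa using isCompactOperator_zero
  | cons a s ha ih =>
    rw [Finset.sum_cons]
    have h1 : IsCompactOperator (f a) := h a (Finset.mem_cons_self a s)
    have h2 := ih (fun i hi => h i (Finset.mem_cons_of_mem hi))
    rw [show ⇑(f a + ∑ i ∈ s, f i) = ⇑(f a) + ⇑(∑ i ∈ s, f i) from by ext x; simp]
    exact h1.add h2

lemma isCompactOperator_smul_clm (c : ℝ) {A : H →L[ℝ] H} (h : IsCompactOperator A) :
    IsCompactOperator (c • A) := by
  rw [show ⇑(c • A) = c • ⇑A from by ext x; simp]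
  exact h.smul c

lemma exists_spectral_seq {T : H →L[ℝ] H} (hTc : IsCompactOperator T)
    (hT : ∀ x y : H, ⟪T x, y⟫_ℝ = ⟪x, T y⟫_ℝ) :
    ∃ (lam : ℕ → ℝ) (e : ℕ → H),
      (∀ n, T (e n) = lam n • e n) ∧
      (∀ n, lam n ≠ 0 → ‖e n‖ = 1) ∧
      (∀ n, lam n = 0 → e n = 0) ∧
      (∀ m n, m ≠ n → ⟪e m, e n⟫_ℝ = 0) ∧
      (∀ n, sval T (n + 1) ≤ |lam n|) := by
  classical
  set step : (H →L[ℝ] H) → (H →L[ℝ] H) × ℝ × H := fun S =>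
    if h : ∃ p : ℝ × H, |p.1| = ‖S‖ ∧ ‖p.2‖ = 1 ∧ S p.2 = p.1 • p.2 ∧ S ≠ 0
    then (S - h.choose.1 • rkOne h.choose.2 h.choose.2, h.choose.1, h.choose.2)
    else (S, 0, 0) with hstep_def
  set Top : ℕ → (H →L[ℝ] H) := fun n => Nat.rec T (fun _ S => (step S).1) n with hTop_def
  set lam : ℕ → ℝ := fun n => (step (Top n)).2.1 with hlam_def
  set e : ℕ → H := fun n => (step (Top n)).2.2 with he_def
  have hTop0 : Top 0 = T := rfl
  have hlam_eq : ∀ n, (step (Top n)).2.1 = lam n := fun _ => rfl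
  have he_eq : ∀ n, (step (Top n)).2.2 = e n := fun _ => rfl
  have hTopS : ∀ n, Top (n + 1) = (step (Top n)).1 := fun n => rfl
  -- universal facts about `step`
  have hstep_pos : ∀ (S : H →L[ℝ] H)
      (h : ∃ p : ℝ × H, |p.1| = ‖S‖ ∧ ‖p.2‖ = 1 ∧ S p.2 = p.1 • p.2 ∧ S ≠ 0),
      step S = (S - h.choose.1 • rkOne h.choose.2 h.choose.2, h.choose.1, h.choose.2) := by
    intro S h
    rw [hstep_def]
    dsimp only
    exact dif_pos h
  have hstep_neg : ∀ (S : H →L[ℝ] H),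
      ¬(∃ p : ℝ × H, |p.1| = ‖S‖ ∧ ‖p.2‖ = 1 ∧ S p.2 = p.1 • p.2 ∧ S ≠ 0) →
      step S = (S, 0, 0) := by
    intro S h
    rw [hstep_def]
    dsimp only
    exact dif_neg h
  have hstep1 : ∀ S : H →L[ℝ] H, (step S).1 = S - (step S).2.1 • rkOne (step S).2.2 (step S).2.2 := by
    intro S
    by_cases h : ∃ p : ℝ × H, |p.1| = ‖S‖ ∧ ‖p.2‖ = 1 ∧ S p.2 = p.1 • p.2 ∧ S ≠ 0
    · rw [hstep_pos S h]
    · rw [hstep_neg S h]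
      simp
  have hstep_eig : ∀ S : H →L[ℝ] H, S (step S).2.2 = (step S).2.1 • (step S).2.2 := by
    intro S
    by_cases h : ∃ p : ℝ × H, |p.1| = ‖S‖ ∧ ‖p.2‖ = 1 ∧ S p.2 = p.1 • p.2 ∧ S ≠ 0
    · rw [hstep_pos S h]
      exact h.choose_spec.2.2.1
    · rw [hstep_neg S h]
      simp
  have hstep_unit : ∀ S : H →L[ℝ] H, (step S).2.1 ≠ 0 → ‖(step S).2.2‖ = 1 := by
    intro S hne
    by_cases h : ∃ p : ℝ × H, |p.1| = ‖S‖ ∧ ‖p.2‖ = 1 ∧ S p.2 = p.1 • p.2 ∧ S ≠ 0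
    · rw [hstep_pos S h]
      exact h.choose_spec.2.1
    · rw [hstep_neg S h] at hne
      simp at hne
  have hstep_zero : ∀ S : H →L[ℝ] H, (step S).2.1 = 0 → (step S).2.2 = 0 := by
    intro S h0
    by_cases h : ∃ p : ℝ × H, |p.1| = ‖S‖ ∧ ‖p.2‖ = 1 ∧ S p.2 = p.1 • p.2 ∧ S ≠ 0
    · exfalso
      rw [hstep_pos S h] at h0
      have h1 := h.choose_spec.1
      have h2 := h.choose_spec.2.2.2
      rw [h0] at h1
      simp only [abs_zero] at h1
      exact h2 (by rwa [eq_comm, norm_eq_zero] at h1)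
    · rw [hstep_neg S h]
  have hstep_absnorm : ∀ S : H →L[ℝ] H, IsCompactOperator S →
      (∀ x y : H, ⟪S x, y⟫_ℝ = ⟪x, S y⟫_ℝ) → |(step S).2.1| = ‖S‖ := by
    intro S hc hs
    by_cases h : ∃ p : ℝ × H, |p.1| = ‖S‖ ∧ ‖p.2‖ = 1 ∧ S p.2 = p.1 • p.2 ∧ S ≠ 0
    · rw [hstep_pos S h]
      exact h.choose_spec.1
    · rw [hstep_neg S h]
      rcases eq_or_ne S 0 with rfl | hS0
      · simp
      · exfalso
        obtain ⟨l, u, h1, h2, h3⟩ := exists_eigen_of_compact_symmetric hc hs hS0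
        exact h ⟨(l, u), h1, h2, h3, hS0⟩
  -- main invariant
  have hinv : ∀ n, IsCompactOperator (Top n) ∧
      (∀ x y : H, ⟪Top n x, y⟫_ℝ = ⟪x, Top n y⟫_ℝ) ∧
      (∀ k, k < n → Top n (e k) = 0) := by
    intro n
    induction n with
    | zero => exact ⟨hTc, hT, fun k hk => absurd hk (Nat.not_lt_zero k)⟩
    | succ n ih =>
      obtain ⟨ihc, ihs, ihz⟩ := ih
      have heq : Top (n + 1) = Top n - lam n • rkOne (e n) (e n) := by
        rw [hTopS n, hstep1 (Top n)]
      have hen : Top n (e n) = lam n • e n := hstep_eig (Top n)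
      refine ⟨?_, ?_, ?_⟩
      · rw [heq]
        have h1 : IsCompactOperator (lam n • rkOne (e n) (e n)) :=
          isCompactOperator_smul_clm _ (isCompactOperator_rkOne _ _)
        have : ⇑(Top n - lam n • rkOne (e n) (e n)) = ⇑(Top n) - ⇑(lam n • rkOne (e n) (e n)) := by
          ext x; simp
        rw [IsCompactOperator, this]
        exact ihc.sub h1
      · intro x y
        rw [heq]
        simp only [ContinuousLinearMap.sub_apply, ContinuousLinearMap.smul_apply, rkOne_apply,
          inner_sub_left, inner_sub_right, inner_smul_left, inner_smul_right,
          real_inner_smul_left, real_inner_smul_right, RingHom.id_apply, conj_trivial]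
        rw [ihs x y]
        have : ⟪e n, x⟫_ℝ * ⟪e n, y⟫_ℝ = ⟪x, e n⟫_ℝ * ⟪e n, y⟫_ℝ := by
          rw [real_inner_comm (e n) x]
        rw [real_inner_comm (e n) x, real_inner_comm y (e n)]
        ring
      · intro k hk
        rcases Nat.lt_succ_iff_lt_or_eq.1 hk with hk' | rfl
        · rw [heq]
          simp only [ContinuousLinearMap.sub_apply, ContinuousLinearMap.smul_apply, rkOne_apply,
            ihz k hk']
          have hz : lam n * ⟪e n, e k⟫_ℝ = 0 := by
            have h1 : ⟪Top n (e n), e k⟫_ℝ = ⟪e n, Top n (e k)⟫_ℝ := ihs (e n) (e k)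
            rw [hen, ihz k hk', inner_zero_right, real_inner_smul_left] at h1
            exact h1
          rw [smul_smul, hz]
          simp
        · rw [heq]
          simp only [ContinuousLinearMap.sub_apply, ContinuousLinearMap.smul_apply, rkOne_apply, hen]
          rcases eq_or_ne (lam k) 0 with h0 | h0
          · rw [h0]
            simp
          · have h1 : ‖e k‖ = 1 := hstep_unit (Top k) h0
            rw [smul_smul, real_inner_self_eq_norm_sq, h1]
            simp
  -- decomposition
  have hdecomp : ∀ n, Top n = T - ∑ k ∈ Finset.range n, lam k • rkOne (e k) (e k) := by
    intro n
    induction n with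
    | zero =>
      rw [Finset.range_zero, Finset.sum_empty, sub_zero]
      exact hTop0
    | succ n ih =>
      rw [hTopS n, hstep1 (Top n), hlam_eq, he_eq, ih, Finset.sum_range_succ, sub_sub]
  -- orthogonality
  have horth : ∀ m n : ℕ, m ≠ n → ⟪e m, e n⟫_ℝ = 0 := by
    have key : ∀ m n : ℕ, m < n → ⟪e n, e m⟫_ℝ = 0 := by
      intro m n hmn
      obtain ⟨-, hs, hz⟩ := hinv n
      rcases eq_or_ne (lam n) 0 with h0 | h0
      · rw [show e n = 0 from hstep_zero (Top n) h0]
        simp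
      · have h1 : ⟪Top n (e n), e m⟫_ℝ = ⟪e n, Top n (e m)⟫_ℝ := hs (e n) (e m)
        rw [hstep_eig (Top n), hz m hmn, inner_zero_right, real_inner_smul_left] at h1
        exact (mul_eq_zero.1 h1).resolve_left h0
    intro m n hmn
    rcases lt_or_gt_of_ne hmn with h | h
    · rw [real_inner_comm]
      exact key m n h
    · exact key n m h
  -- eigenvector property for T
  have heigT : ∀ n, T (e n) = lam n • e n := by
    intro n
    have h1 : Top n (e n) = lam n • e n := hstep_eig (Top n)
    rw [hdecomp n] at h1
    simp only [ContinuousLinearMap.sub_apply, ContinuousLinearMap.sum_apply,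
      ContinuousLinearMap.smul_apply, rkOne_apply] at h1
    have h2 : ∀ k ∈ Finset.range n, lam k • ⟪e k, e n⟫_ℝ • e k = 0 := by
      intro k hk
      rw [horth k n (Finset.mem_range.1 hk).ne]
      simp
    rw [Finset.sum_congr rfl h2, Finset.sum_const_zero, sub_zero] at h1
    exact h1
  refine ⟨lam, e, heigT, fun n => hstep_unit (Top n), fun n => hstep_zero (Top n), horth, ?_⟩
  -- the singular value bound
  intro n
  have hnorm : ‖Top n‖ = |lam n| := by
    obtain ⟨hc, hs, -⟩ := hinv n
    exact (hstep_absnorm (Top n) hc hs).symm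
  have hmem : ‖Top n‖ ∈ {r : ℝ | ∃ L : H →L[ℝ] H, IsCompactOperator L ∧
      Module.rank ℝ (LinearMap.range (L : H →ₗ[ℝ] H)) ≤ ((n + 1 - 1 : ℕ) : Cardinal) ∧ r = ‖T - L‖} := by
    refine ⟨∑ k ∈ Finset.range n, lam k • rkOne (e k) (e k), ?_, ?_, ?_⟩
    · exact isCompactOperator_finsetSum _ _ (fun k _ =>
        isCompactOperator_smul_clm _ (isCompactOperator_rkOne _ _))
    · simp only [Nat.add_sub_cancel]
      have hle : LinearMap.range ((∑ k ∈ Finset.range n, lam k • rkOne (e k) (e k) : H →L[ℝ] H) : H →ₗ[ℝ] H)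
          ≤ Submodule.span ℝ (e '' (Finset.range n : Set ℕ)) := by
        rintro x ⟨y, rfl⟩
        simp only [ContinuousLinearMap.coe_coe, ContinuousLinearMap.coe_sum', ContinuousLinearMap.coe_smul',
          Finset.sum_apply, Pi.smul_apply, rkOne_apply]
        refine Submodule.sum_mem _ (fun k hk => ?_)
        refine Submodule.smul_mem _ _ (Submodule.smul_mem _ _ ?_)
        exact Submodule.subset_span ⟨k, by simpa using Finset.mem_range.1 hk, rfl⟩
      calc Module.rank ℝ (LinearMap.range ((∑ k ∈ Finset.range n, lam k • rkOne (e k) (e k) : H →L[ℝ] H) : H →ₗ[ℝ] H))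
          ≤ Module.rank ℝ (Submodule.span ℝ (e '' (Finset.range n : Set ℕ))) :=
            Submodule.rank_mono hle
        _ ≤ Cardinal.mk (e '' (Finset.range n : Set ℕ)) := rank_span_le _
        _ = Cardinal.mk (((Finset.range n).image e : Finset H) : Set H) := by
              rw [Finset.coe_image]
        _ = (((Finset.range n).image e).card : Cardinal) := Cardinal.mk_coe_finset
        _ ≤ (n : Cardinal) := by
              have := Finset.card_image_le (s := Finset.range n) (f := e)
              rw [Finset.card_range] at this
              exact_mod_cast this
    · rw [hdecomp n]
  have hbdd : BddBelow {r : ℝ | ∃ L : H →L[ℝ] H, IsCompactOperator L ∧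
      Module.rank ℝ (LinearMap.range (L : H →ₗ[ℝ] H)) ≤ ((n + 1 - 1 : ℕ) : Cardinal) ∧ r = ‖T - L‖} := by
    refine ⟨0, ?_⟩
    rintro r ⟨L, -, -, rfl⟩
    exact norm_nonneg _
  calc sval T (n + 1) ≤ ‖Top n‖ := csInf_le hbdd hmem
  _ = |lam n| := hnorm

end Spectral

section Meas
variable {H : Type*} [NormedAddCommGroup H] [InnerProductSpace ℝ H] [CompleteSpace H]
  {Ω : Type*} [MeasurableSpace Ω] {ℙ : Measure Ω} [IsProbabilityMeasure ℙ]

-- (A) integrability of the covariance integrand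
lemma integrable_inner_smul {X : Ω → H} (hXm : AEStronglyMeasurable X ℙ)
    (hX2 : Integrable (fun ω => ‖X ω‖ ^ 2) ℙ) (u : H) :
    Integrable (fun ω => ⟪u, X ω⟫_ℝ • X ω) ℙ := by
  refine Integrable.mono' (hX2.const_mul ‖u‖) ((aestronglyMeasurable_const.inner hXm).smul hXm) ?_
  filter_upwards with ω
  rw [norm_smul, Real.norm_eq_abs]
  calc |⟪u, X ω⟫_ℝ| * ‖X ω‖ ≤ ‖u‖ * ‖X ω‖ * ‖X ω‖ := by
        have := abs_real_inner_le_norm u (X ω)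
        nlinarith [norm_nonneg (X ω)]
  _ = ‖u‖ * ‖X ω‖ ^ 2 := by ring

-- (I) integrability of squared inner products
lemma integrable_inner_sq {X : Ω → H} (hXm : AEStronglyMeasurable X ℙ)
    (hX2 : Integrable (fun ω => ‖X ω‖ ^ 2) ℙ) (u : H) :
    Integrable (fun ω => ⟪u, X ω⟫_ℝ ^ 2) ℙ := by
  refine Integrable.mono' (hX2.const_mul (‖u‖ ^ 2))
    ((aestronglyMeasurable_const.inner hXm).pow 2) ?_
  filter_upwards with ω
  rw [Real.norm_eq_abs, abs_pow, sq_abs]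
  have h := abs_real_inner_le_norm u (X ω)
  calc ⟪u, X ω⟫_ℝ ^ 2 = |⟪u, X ω⟫_ℝ| ^ 2 := (sq_abs _).symm
  _ ≤ (‖u‖ * ‖X ω‖) ^ 2 := by
      have := abs_nonneg ⟪u, X ω⟫_ℝ
      nlinarith
  _ = ‖u‖ ^ 2 * ‖X ω‖ ^ 2 := by ring

-- (B) inner products with covariance operator
lemma inner_cov_eq {X : Ω → H} (hXm : AEStronglyMeasurable X ℙ)
    (hX2 : Integrable (fun ω => ‖X ω‖ ^ 2) ℙ) {B : H →L[ℝ] H}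
    (hB : ∀ u : H, B u = ∫ ω, ⟪u, X ω⟫_ℝ • X ω ∂ℙ) (u w : H) :
    ⟪w, B u⟫_ℝ = ∫ ω, ⟪u, X ω⟫_ℝ * ⟪w, X ω⟫_ℝ ∂ℙ := by
  rw [hB u, ← integral_inner (integrable_inner_smul hXm hX2 u) w]
  congr 1
  funext ω
  rw [real_inner_smul_right]

-- (C) symmetry
lemma cov_symm {X : Ω → H} (hXm : AEStronglyMeasurable X ℙ)
    (hX2 : Integrable (fun ω => ‖X ω‖ ^ 2) ℙ) {B : H →L[ℝ] H}
    (hB : ∀ u : H, B u = ∫ ω, ⟪u, X ω⟫_ℝ • X ω ∂ℙ) (u w : H) :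
    ⟪B u, w⟫_ℝ = ⟪u, B w⟫_ℝ := by
  calc ⟪B u, w⟫_ℝ = ⟪w, B u⟫_ℝ := real_inner_comm _ _
  _ = ∫ ω, ⟪u, X ω⟫_ℝ * ⟪w, X ω⟫_ℝ ∂ℙ := inner_cov_eq hXm hX2 hB u w
  _ = ∫ ω, ⟪w, X ω⟫_ℝ * ⟪u, X ω⟫_ℝ ∂ℙ :=
      integral_congr_ae (Filter.Eventually.of_forall fun ω => mul_comm _ _)
  _ = ⟪u, B w⟫_ℝ := (inner_cov_eq hXm hX2 hB w u).symm

-- (E') integrability of a product of norms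
lemma integrable_norm_mul {X Y : Ω → H} (hXm : AEStronglyMeasurable X ℙ)
    (hYm : AEStronglyMeasurable Y ℙ)
    (hX2 : Integrable (fun ω => ‖X ω‖ ^ 2) ℙ) (hY2 : Integrable (fun ω => ‖Y ω‖ ^ 2) ℙ) :
    Integrable (fun ω => ‖X ω‖ * ‖Y ω‖) ℙ := by
  refine Integrable.mono' (hX2.add hY2) (hXm.norm.mul hYm.norm) ?_
  filter_upwards with ω
  simp only [Pi.add_apply]
  rw [Real.norm_eq_abs, abs_of_nonneg (by positivity)]
  nlinarith [sq_nonneg (‖X ω‖ - ‖Y ω‖), norm_nonneg (X ω), norm_nonneg (Y ω)]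

-- (E) Cauchy–Schwarz in L²
lemma integral_norm_mul_le {X Y : Ω → H} (hXm : AEStronglyMeasurable X ℙ)
    (hYm : AEStronglyMeasurable Y ℙ)
    (hX2 : Integrable (fun ω => ‖X ω‖ ^ 2) ℙ) (hY2 : Integrable (fun ω => ‖Y ω‖ ^ 2) ℙ) :
    ∫ ω, ‖X ω‖ * ‖Y ω‖ ∂ℙ ≤
      Real.sqrt (∫ ω, ‖X ω‖ ^ 2 ∂ℙ) * Real.sqrt (∫ ω, ‖Y ω‖ ^ 2 ∂ℙ) := by
  have hconj : Real.HolderConjugate 2 2 := Real.HolderConjugate.two_two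
  have h2 : (ENNReal.ofReal (2:ℝ)) = 2 := by norm_num
  have hXp : MemLp X (ENNReal.ofReal (2:ℝ)) ℙ := by
    rw [h2]; exact (memLp_two_iff_integrable_sq_norm hXm).2 hX2
  have hYp : MemLp Y (ENNReal.ofReal (2:ℝ)) ℙ := by
    rw [h2]; exact (memLp_two_iff_integrable_sq_norm hYm).2 hY2
  have := integral_mul_norm_le_Lp_mul_Lq hconj hXp hYp
  have hrw : ∀ W : Ω → H, (∫ ω, ‖W ω‖ ^ (2:ℝ) ∂ℙ) ^ ((1:ℝ)/2) = Real.sqrt (∫ ω, ‖W ω‖ ^ 2 ∂ℙ) := by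
    intro W
    rw [Real.sqrt_eq_rpow]
    congr 1
    · congr 1
      funext ω
      rw [← Real.rpow_natCast ‖W ω‖ 2]
      norm_num
  rw [hrw X, hrw Y] at this
  exact this

-- (F) Minkowski-type inequality
lemma sqrt_integral_add_le {X Y : Ω → H} (hXm : AEStronglyMeasurable X ℙ)
    (hYm : AEStronglyMeasurable Y ℙ)
    (hX2 : Integrable (fun ω => ‖X ω‖ ^ 2) ℙ) (hY2 : Integrable (fun ω => ‖Y ω‖ ^ 2) ℙ) :
    Real.sqrt (∫ ω, ‖X ω + Y ω‖ ^ 2 ∂ℙ) ≤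
      Real.sqrt (∫ ω, ‖X ω‖ ^ 2 ∂ℙ) + Real.sqrt (∫ ω, ‖Y ω‖ ^ 2 ∂ℙ) := by
  set a := ∫ ω, ‖X ω‖ ^ 2 ∂ℙ with ha
  set b := ∫ ω, ‖Y ω‖ ^ 2 ∂ℙ with hb
  have ha0 : 0 ≤ a := integral_nonneg (fun ω => sq_nonneg _)
  have hb0 : 0 ≤ b := integral_nonneg (fun ω => sq_nonneg _)
  have hXY2 : Integrable (fun ω => ‖X ω + Y ω‖ ^ 2) ℙ := by
    refine Integrable.mono' ((hX2.add hY2).add ((integrable_norm_mul hXm hYm hX2 hY2).const_mul 2))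
      ((hXm.add hYm).norm.pow 2) ?_
    filter_upwards with ω
    simp only [Pi.add_apply]
    rw [Real.norm_eq_abs, abs_of_nonneg (by positivity)]
    have h1 : ‖X ω + Y ω‖ ≤ ‖X ω‖ + ‖Y ω‖ := norm_add_le _ _
    have h2 : (0:ℝ) ≤ ‖X ω + Y ω‖ := norm_nonneg _
    nlinarith [norm_nonneg (X ω), norm_nonneg (Y ω)]
  have hprod := integrable_norm_mul hXm hYm hX2 hY2
  have hint1 : Integrable (fun ω => 2 * (‖X ω‖ * ‖Y ω‖)) ℙ := by exact hprod.const_mul 2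
  have hint2 : Integrable (fun ω => ‖X ω‖ ^ 2 + 2 * (‖X ω‖ * ‖Y ω‖)) ℙ := by exact hX2.add hint1
  have hmono : ∫ ω, ‖X ω + Y ω‖ ^ 2 ∂ℙ ≤ a + 2 * ∫ ω, ‖X ω‖ * ‖Y ω‖ ∂ℙ + b := by
    have h1 : ∫ ω, ‖X ω + Y ω‖ ^ 2 ∂ℙ
        ≤ ∫ ω, (‖X ω‖ ^ 2 + 2 * (‖X ω‖ * ‖Y ω‖) + ‖Y ω‖ ^ 2) ∂ℙ := by
      refine integral_mono hXY2 (by exact hint2.add hY2) ?_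
      intro ω
      have h1 : ‖X ω + Y ω‖ ≤ ‖X ω‖ + ‖Y ω‖ := norm_add_le _ _
      have h2 : (0:ℝ) ≤ ‖X ω + Y ω‖ := norm_nonneg _
      simp only
      nlinarith [norm_nonneg (X ω), norm_nonneg (Y ω)]
    rw [integral_add hint2 hY2, integral_add hX2 hint1, integral_const_mul] at h1
    linarith
  have hcs := integral_norm_mul_le (ℙ := ℙ) hXm hYm hX2 hY2
  have hfin : ∫ ω, ‖X ω + Y ω‖ ^ 2 ∂ℙ ≤ (Real.sqrt a + Real.sqrt b) ^ 2 := by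
    have hsq : (Real.sqrt a + Real.sqrt b) ^ 2
        = a + 2 * (Real.sqrt a * Real.sqrt b) + b := by
      rw [add_sq, Real.sq_sqrt ha0, Real.sq_sqrt hb0]
      ring
    rw [hsq]
    rw [← ha, ← hb] at hcs
    linarith
  calc Real.sqrt (∫ ω, ‖X ω + Y ω‖ ^ 2 ∂ℙ) ≤ Real.sqrt ((Real.sqrt a + Real.sqrt b) ^ 2) :=
        Real.sqrt_le_sqrt hfin
  _ = Real.sqrt a + Real.sqrt b := Real.sqrt_sq (by positivity)

end Meas

section Compactness
variable {H : Type*} [NormedAddCommGroup H] [InnerProductSpace ℝ H] [CompleteSpace H]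
  [TopologicalSpace.SeparableSpace H] [MeasurableSpace H] [BorelSpace H]
  {Ω : Type*} [MeasurableSpace Ω] {ℙ : Measure Ω} [IsProbabilityMeasure ℙ]

-- operator-norm distance between two covariance-type operators
lemma cov_diff_bound {X Y : Ω → H} (hXm : AEStronglyMeasurable X ℙ)
    (hYm : AEStronglyMeasurable Y ℙ)
    (hX2 : Integrable (fun ω => ‖X ω‖ ^ 2) ℙ) (hY2 : Integrable (fun ω => ‖Y ω‖ ^ 2) ℙ)
    (u : H) :
    ‖(∫ ω, ⟪u, X ω⟫_ℝ • X ω ∂ℙ) - ∫ ω, ⟪u, Y ω⟫_ℝ • Y ω ∂ℙ‖ ≤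
      Real.sqrt (∫ ω, ‖X ω - Y ω‖ ^ 2 ∂ℙ) *
        (Real.sqrt (∫ ω, ‖X ω‖ ^ 2 ∂ℙ) + Real.sqrt (∫ ω, ‖Y ω‖ ^ 2 ∂ℙ)) * ‖u‖ := by
  have hXYm : AEStronglyMeasurable (fun ω => X ω - Y ω) ℙ := hXm.sub hYm
  have hXY2 : Integrable (fun ω => ‖X ω - Y ω‖ ^ 2) ℙ := by
    have h1 : MemLp (fun ω => X ω - Y ω) 2 ℙ :=
      ((memLp_two_iff_integrable_sq_norm hXm).2 hX2).sub ((memLp_two_iff_integrable_sq_norm hYm).2 hY2)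
    exact (memLp_two_iff_integrable_sq_norm hXYm).1 h1
  have hintX := integrable_inner_smul hXm hX2 u
  have hintY := integrable_inner_smul hYm hY2 u
  have h1 : (∫ ω, ⟪u, X ω⟫_ℝ • X ω ∂ℙ) - ∫ ω, ⟪u, Y ω⟫_ℝ • Y ω ∂ℙ
      = ∫ ω, (⟪u, X ω⟫_ℝ • X ω - ⟪u, Y ω⟫_ℝ • Y ω) ∂ℙ := (integral_sub hintX hintY).symm
  have hptw : ∀ ω, ‖⟪u, X ω⟫_ℝ • X ω - ⟪u, Y ω⟫_ℝ • Y ω‖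
      ≤ ‖u‖ * (‖X ω - Y ω‖ * ‖X ω‖ + ‖Y ω‖ * ‖X ω - Y ω‖) := by
    intro ω
    have hdec : ⟪u, X ω⟫_ℝ • X ω - ⟪u, Y ω⟫_ℝ • Y ω
        = ⟪u, X ω - Y ω⟫_ℝ • X ω + ⟪u, Y ω⟫_ℝ • (X ω - Y ω) := by
      rw [inner_sub_right]
      module
    rw [hdec]
    calc ‖⟪u, X ω - Y ω⟫_ℝ • X ω + ⟪u, Y ω⟫_ℝ • (X ω - Y ω)‖
        ≤ ‖⟪u, X ω - Y ω⟫_ℝ • X ω‖ + ‖⟪u, Y ω⟫_ℝ • (X ω - Y ω)‖ := norm_add_le _ _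
    _ = |⟪u, X ω - Y ω⟫_ℝ| * ‖X ω‖ + |⟪u, Y ω⟫_ℝ| * ‖X ω - Y ω‖ := by
        rw [norm_smul, norm_smul, Real.norm_eq_abs, Real.norm_eq_abs]
    _ ≤ ‖u‖ * ‖X ω - Y ω‖ * ‖X ω‖ + ‖u‖ * ‖Y ω‖ * ‖X ω - Y ω‖ := by
        have h2 := abs_real_inner_le_norm u (X ω - Y ω)
        have h3 := abs_real_inner_le_norm u (Y ω)
        have h4 := norm_nonneg (X ω)
        have h5 := norm_nonneg (X ω - Y ω)
        nlinarith
    _ = ‖u‖ * (‖X ω - Y ω‖ * ‖X ω‖ + ‖Y ω‖ * ‖X ω - Y ω‖) := by ring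
  have hintdom : Integrable (fun ω => ‖u‖ * (‖X ω - Y ω‖ * ‖X ω‖ + ‖Y ω‖ * ‖X ω - Y ω‖)) ℙ := by
    have i1 := integrable_norm_mul hXYm hXm hXY2 hX2
    have i2 := integrable_norm_mul hYm hXYm hY2 hXY2
    exact (i1.add i2).const_mul _
  calc ‖(∫ ω, ⟪u, X ω⟫_ℝ • X ω ∂ℙ) - ∫ ω, ⟪u, Y ω⟫_ℝ • Y ω ∂ℙ‖
      = ‖∫ ω, (⟪u, X ω⟫_ℝ • X ω - ⟪u, Y ω⟫_ℝ • Y ω) ∂ℙ‖ := by rw [h1]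
  _ ≤ ∫ ω, ‖⟪u, X ω⟫_ℝ • X ω - ⟪u, Y ω⟫_ℝ • Y ω‖ ∂ℙ := norm_integral_le_integral_norm _
  _ ≤ ∫ ω, ‖u‖ * (‖X ω - Y ω‖ * ‖X ω‖ + ‖Y ω‖ * ‖X ω - Y ω‖) ∂ℙ := by
      refine integral_mono ((hintX.sub hintY).norm) hintdom (fun ω => hptw ω)
  _ = ‖u‖ * ((∫ ω, ‖X ω - Y ω‖ * ‖X ω‖ ∂ℙ) + ∫ ω, ‖Y ω‖ * ‖X ω - Y ω‖ ∂ℙ) := by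
      rw [integral_const_mul]
      congr 1
      exact integral_add (integrable_norm_mul hXYm hXm hXY2 hX2)
        (integrable_norm_mul hYm hXYm hY2 hXY2)
  _ ≤ ‖u‖ * (Real.sqrt (∫ ω, ‖X ω - Y ω‖ ^ 2 ∂ℙ) * Real.sqrt (∫ ω, ‖X ω‖ ^ 2 ∂ℙ)
        + Real.sqrt (∫ ω, ‖Y ω‖ ^ 2 ∂ℙ) * Real.sqrt (∫ ω, ‖X ω - Y ω‖ ^ 2 ∂ℙ)) := by
      have hA := integral_norm_mul_le hXYm hXm hXY2 hX2
      have hB := integral_norm_mul_le hYm hXYm hY2 hXY2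
      have := norm_nonneg u
      nlinarith
  _ = Real.sqrt (∫ ω, ‖X ω - Y ω‖ ^ 2 ∂ℙ) *
        (Real.sqrt (∫ ω, ‖X ω‖ ^ 2 ∂ℙ) + Real.sqrt (∫ ω, ‖Y ω‖ ^ 2 ∂ℙ)) * ‖u‖ := by ring

lemma cov_isCompactOperator {X : Ω → H} (hXm : Measurable X)
    (hX2 : Integrable (fun ω => ‖X ω‖ ^ 2) ℙ) {B : H →L[ℝ] H}
    (hB : ∀ u : H, B u = ∫ ω, ⟪u, X ω⟫_ℝ • X ω ∂ℙ) :
    IsCompactOperator B := by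
  haveI : SecondCountableTopology H := UniformSpace.secondCountable_of_separable H
  have hXae : AEStronglyMeasurable X ℙ := hXm.aestronglyMeasurable
  have hXp : MemLp X 2 ℙ := (memLp_two_iff_integrable_sq_norm hXae).2 hX2
  have ha0 : (0:ℝ) ≤ Real.sqrt (∫ ω, ‖X ω‖ ^ 2 ∂ℙ) := Real.sqrt_nonneg _
  -- for every ε > 0 there is a compact operator within ε·C of B
  have key : ∀ n : ℕ, ∃ L : H →L[ℝ] H, IsCompactOperator L ∧
      ‖B - L‖ ≤ (1/(n+1)) * (2 * Real.sqrt (∫ ω, ‖X ω‖ ^ 2 ∂ℙ) + 1/(n+1)) := by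
    intro n
    have hεpos : (0:ℝ) < 1/(n+1) := by positivity
    obtain ⟨g, hg, hgmem⟩ := hXp.exists_simpleFunc_eLpNorm_sub_lt (ENNReal.ofNat_ne_top)
      (ε := ENNReal.ofReal (1/(n+1)))
      (by simp only [Ne, ENNReal.ofReal_eq_zero, not_le]; exact hεpos)
    have hgae : AEStronglyMeasurable g ℙ := g.stronglyMeasurable.aestronglyMeasurable
    have hg2 : Integrable (fun ω => ‖g ω‖ ^ 2) ℙ := (memLp_two_iff_integrable_sq_norm hgae).1 hgmem
    -- the L² distance bound in integral form
    have hXgm : AEStronglyMeasurable (fun ω => X ω - g ω) ℙ := hXae.sub hgae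
    have hXg2 : Integrable (fun ω => ‖X ω - g ω‖ ^ 2) ℙ :=
      (memLp_two_iff_integrable_sq_norm hXgm).1 (hXp.sub hgmem)
    have hL2 : Real.sqrt (∫ ω, ‖X ω - g ω‖ ^ 2 ∂ℙ) ≤ 1/(n+1) := by
      have heq := (hXp.sub hgmem).eLpNorm_eq_integral_rpow_norm two_ne_zero ENNReal.ofNat_ne_top
      rw [heq] at hg
      have h2 : ((2:ℝ≥0∞).toReal) = (2:ℝ) := by norm_num
      rw [h2] at hg
      have h3 := (ENNReal.ofReal_lt_ofReal_iff hεpos).1 hg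
      have h4 : (∫ ω, ‖(X - ⇑g) ω‖ ^ (2:ℝ) ∂ℙ) ^ ((2:ℝ)⁻¹)
          = Real.sqrt (∫ ω, ‖X ω - g ω‖ ^ 2 ∂ℙ) := by
        rw [Real.sqrt_eq_rpow, one_div]
        congr 1
        refine integral_congr_ae (Filter.Eventually.of_forall fun ω => ?_)
        simp only [Pi.sub_apply]
        rw [← Real.rpow_natCast ‖X ω - g ω‖ 2]
        norm_num
      rw [← h4]
      rw [one_div] at h3 ⊢
      exact le_of_lt h3
    -- the finite-rank approximation
    set L : H →L[ℝ] H := ∑ v ∈ g.range, (ℙ (⇑g ⁻¹' {v})).toReal • rkOne v v with hL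
    have hgint : Integrable g ℙ := hgmem.integrable one_le_two
    have hLapply : ∀ u : H, L u = ∫ ω, ⟪u, g ω⟫_ℝ • g ω ∂ℙ := by
      intro u
      have hF0 : (fun v : H => ⟪u, v⟫_ℝ • v) 0 = 0 := by simp
      have hmapint : Integrable (fun ω => ⟪u, g ω⟫_ℝ • g ω) ℙ :=
        integrable_inner_smul hgae hg2 u
      have hmap : (⇑(g.map (fun v : H => ⟪u, v⟫_ℝ • v)) : Ω → H) = fun ω => ⟪u, g ω⟫_ℝ • g ω := by
        funext ω
        simp [SimpleFunc.map_apply]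
      have h5 : ∫ ω, ⟪u, g ω⟫_ℝ • g ω ∂ℙ = (g.map (fun v : H => ⟪u, v⟫_ℝ • v)).integral ℙ := by
        rw [SimpleFunc.integral_eq_integral _ (by rwa [hmap])]
        rw [hmap]
      have h6 := SimpleFunc.map_integral (μ := ℙ) g (fun v : H => ⟪u, v⟫_ℝ • v) hgint hF0
      rw [h5, h6]
      simp only [hL, ContinuousLinearMap.sum_apply, ContinuousLinearMap.smul_apply, rkOne_apply,
        smul_smul]
      refine Finset.sum_congr rfl (fun v hv => ?_)
      rw [real_inner_comm v u, measureReal_def]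
    refine ⟨L, ?_, ?_⟩
    · have := isCompactOperator_finsetSum (H := H) g.range
        (fun v => (ℙ (⇑g ⁻¹' {v})).toReal • rkOne v v)
        (fun v _ => isCompactOperator_smul_clm _ (isCompactOperator_rkOne v v))
      exact this
    · refine ContinuousLinearMap.opNorm_le_bound _ (by positivity) (fun u => ?_)
      have h6 : (B - L) u = (∫ ω, ⟪u, X ω⟫_ℝ • X ω ∂ℙ) - ∫ ω, ⟪u, g ω⟫_ℝ • g ω ∂ℙ := by
        rw [ContinuousLinearMap.sub_apply, hB u, hLapply u]
      rw [h6]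
      have hbd := cov_diff_bound hXae hgae hX2 hg2 u
      have hb : Real.sqrt (∫ ω, ‖g ω‖ ^ 2 ∂ℙ)
          ≤ Real.sqrt (∫ ω, ‖X ω‖ ^ 2 ∂ℙ) + 1/(n+1) := by
        have hYae : AEStronglyMeasurable (fun ω => g ω - X ω) ℙ := hgae.sub hXae
        have hY2 : Integrable (fun ω => ‖g ω - X ω‖ ^ 2) ℙ := by
          have heq : (fun ω => ‖g ω - X ω‖ ^ 2) = (fun ω => ‖X ω - g ω‖ ^ 2) := by
            funext ω
            rw [norm_sub_rev]
          rw [heq]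
          exact hXg2
        have h8 := sqrt_integral_add_le hXae hYae hX2 hY2
        have hgequal : (∫ ω, ‖X ω + (g ω - X ω)‖ ^ 2 ∂ℙ) = ∫ ω, ‖g ω‖ ^ 2 ∂ℙ := by
          congr 1
          funext ω
          congr 2
          abel
        have h10 : (∫ ω, ‖g ω - X ω‖ ^ 2 ∂ℙ) = ∫ ω, ‖X ω - g ω‖ ^ 2 ∂ℙ := by
          congr 1
          funext ω
          rw [norm_sub_rev]
        rw [hgequal, h10] at h8
        calc Real.sqrt (∫ ω, ‖g ω‖ ^ 2 ∂ℙ)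
            ≤ Real.sqrt (∫ ω, ‖X ω‖ ^ 2 ∂ℙ) + Real.sqrt (∫ ω, ‖X ω - g ω‖ ^ 2 ∂ℙ) := h8
        _ ≤ Real.sqrt (∫ ω, ‖X ω‖ ^ 2 ∂ℙ) + 1/(n+1) := by linarith [hL2]
      calc ‖(∫ ω, ⟪u, X ω⟫_ℝ • X ω ∂ℙ) - ∫ ω, ⟪u, g ω⟫_ℝ • g ω ∂ℙ‖
          ≤ Real.sqrt (∫ ω, ‖X ω - g ω‖ ^ 2 ∂ℙ) *
            (Real.sqrt (∫ ω, ‖X ω‖ ^ 2 ∂ℙ) + Real.sqrt (∫ ω, ‖g ω‖ ^ 2 ∂ℙ)) * ‖u‖ := hbd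
      _ ≤ (1/(n+1)) * (2 * Real.sqrt (∫ ω, ‖X ω‖ ^ 2 ∂ℙ) + 1/(n+1)) * ‖u‖ := by
          have hs0 : (0:ℝ) ≤ Real.sqrt (∫ ω, ‖X ω - g ω‖ ^ 2 ∂ℙ) := Real.sqrt_nonneg _
          have hsb : (0:ℝ) ≤ Real.sqrt (∫ ω, ‖g ω‖ ^ 2 ∂ℙ) := Real.sqrt_nonneg _
          have hu := norm_nonneg u
          have hstep : Real.sqrt (∫ ω, ‖X ω - g ω‖ ^ 2 ∂ℙ) *
              (Real.sqrt (∫ ω, ‖X ω‖ ^ 2 ∂ℙ) + Real.sqrt (∫ ω, ‖g ω‖ ^ 2 ∂ℙ))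
              ≤ (1/(n+1)) * (2 * Real.sqrt (∫ ω, ‖X ω‖ ^ 2 ∂ℙ) + 1/(n+1)) := by
            have h1 : Real.sqrt (∫ ω, ‖X ω‖ ^ 2 ∂ℙ) + Real.sqrt (∫ ω, ‖g ω‖ ^ 2 ∂ℙ)
                ≤ 2 * Real.sqrt (∫ ω, ‖X ω‖ ^ 2 ∂ℙ) + 1/(n+1) := by linarith [hb]
            exact mul_le_mul hL2 h1 (by positivity) (le_of_lt hεpos)
          exact mul_le_mul_of_nonneg_right hstep hu
  choose L hLc hLle using key
  have htend : Filter.Tendsto L Filter.atTop (nhds B) := by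
    rw [tendsto_iff_norm_sub_tendsto_zero]
    have hub : Filter.Tendsto (fun n : ℕ =>
        (1/((n:ℝ)+1)) * (2 * Real.sqrt (∫ ω, ‖X ω‖ ^ 2 ∂ℙ) + 1/((n:ℝ)+1)))
        Filter.atTop (nhds 0) := by
      have h1 : Filter.Tendsto (fun n : ℕ => 1 / ((n:ℝ) + 1)) Filter.atTop (nhds 0) :=
        tendsto_one_div_add_atTop_nhds_zero_nat
      have h2 := h1.mul ((tendsto_const_nhds
        (x := 2 * Real.sqrt (∫ ω, ‖X ω‖ ^ 2 ∂ℙ)) (f := Filter.atTop (α := ℕ))).add h1)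
      simpa using h2
    refine squeeze_zero (fun n => norm_nonneg _) (fun n => ?_) hub
    rw [norm_sub_rev]
    exact hLle n
  exact isCompactOperator_of_tendsto htend (Filter.Eventually.of_forall hLc)

end Compactness

section Bessel
variable {H : Type*} [NormedAddCommGroup H] [InnerProductSpace ℝ H]

lemma bessel_finset {e : ℕ → H} {s : Finset ℕ}
    (hnorm : ∀ n ∈ s, ‖e n‖ = 1)
    (horth : ∀ m ∈ s, ∀ n ∈ s, m ≠ n → ⟪e m, e n⟫_ℝ = 0) (x : H) :
    ∑ n ∈ s, ⟪e n, x⟫_ℝ ^ 2 ≤ ‖x‖ ^ 2 := by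
  have hON : Orthonormal ℝ (fun i : {n // n ∈ s} => e i) := by
    constructor
    · intro i
      exact hnorm i i.2
    · intro i j hij
      exact horth i i.2 j j.2 (fun h => hij (Subtype.ext h))
  have hb := hON.sum_inner_products_le (s := Finset.univ) x
  calc ∑ n ∈ s, ⟪e n, x⟫_ℝ ^ 2 = ∑ i : {n // n ∈ s}, ⟪e ↑i, x⟫_ℝ ^ 2 :=
        (Finset.sum_coe_sort s (fun n => ⟪e n, x⟫_ℝ ^ 2)).symm
  _ = ∑ i : {n // n ∈ s}, ‖⟪e ↑i, x⟫_ℝ‖ ^ 2 := by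
      refine Finset.sum_congr rfl (fun i _ => ?_)
      rw [Real.norm_eq_abs, sq_abs]
  _ ≤ ‖x‖ ^ 2 := hb

lemma abs_inner_mul_inner_sum_le {e : ℕ → H} {s : Finset ℕ}
    (hnorm : ∀ n ∈ s, ‖e n‖ = 1)
    (horth : ∀ m ∈ s, ∀ n ∈ s, m ≠ n → ⟪e m, e n⟫_ℝ = 0) (x y : H) :
    ∑ n ∈ s, |⟪e n, x⟫_ℝ| * |⟪e n, y⟫_ℝ| ≤ ‖x‖ * ‖y‖ := by
  have hcs := Finset.sum_mul_sq_le_sq_mul_sq s (fun n => |⟪e n, x⟫_ℝ|) (fun n => |⟪e n, y⟫_ℝ|)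
  have hx := bessel_finset hnorm horth x
  have hy := bessel_finset hnorm horth y
  have h1 : ∑ n ∈ s, |⟪e n, x⟫_ℝ| ^ 2 = ∑ n ∈ s, ⟪e n, x⟫_ℝ ^ 2 := by
    refine Finset.sum_congr rfl (fun n _ => sq_abs _)
  have h2 : ∑ n ∈ s, |⟪e n, y⟫_ℝ| ^ 2 = ∑ n ∈ s, ⟪e n, y⟫_ℝ ^ 2 := by
    refine Finset.sum_congr rfl (fun n _ => sq_abs _)
  have hsq : (∑ n ∈ s, |⟪e n, x⟫_ℝ| * |⟪e n, y⟫_ℝ|) ^ 2 ≤ (‖x‖ * ‖y‖) ^ 2 := by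
    calc (∑ n ∈ s, |⟪e n, x⟫_ℝ| * |⟪e n, y⟫_ℝ|) ^ 2
        ≤ (∑ n ∈ s, |⟪e n, x⟫_ℝ| ^ 2) * (∑ n ∈ s, |⟪e n, y⟫_ℝ| ^ 2) := hcs
    _ ≤ ‖x‖ ^ 2 * ‖y‖ ^ 2 := by
        rw [h1, h2]
        have hx0 : (0:ℝ) ≤ ∑ n ∈ s, ⟪e n, x⟫_ℝ ^ 2 := Finset.sum_nonneg (fun n _ => sq_nonneg _)
        have hy0 : (0:ℝ) ≤ ∑ n ∈ s, ⟪e n, y⟫_ℝ ^ 2 := Finset.sum_nonneg (fun n _ => sq_nonneg _)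
        have := sq_nonneg ‖x‖
        nlinarith
    _ = (‖x‖ * ‖y‖) ^ 2 := by ring
  have hsum0 : (0:ℝ) ≤ ∑ n ∈ s, |⟪e n, x⟫_ℝ| * |⟪e n, y⟫_ℝ| :=
    Finset.sum_nonneg (fun n _ => mul_nonneg (abs_nonneg _) (abs_nonneg _))
  calc ∑ n ∈ s, |⟪e n, x⟫_ℝ| * |⟪e n, y⟫_ℝ|
      = Real.sqrt ((∑ n ∈ s, |⟪e n, x⟫_ℝ| * |⟪e n, y⟫_ℝ|) ^ 2) := (Real.sqrt_sq hsum0).symm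
  _ ≤ Real.sqrt ((‖x‖ * ‖y‖) ^ 2) := Real.sqrt_le_sqrt hsq
  _ = ‖x‖ * ‖y‖ := Real.sqrt_sq (by positivity)

end Bessel

section TraceBound
variable {H : Type*} [NormedAddCommGroup H] [InnerProductSpace ℝ H] [CompleteSpace H]
  [TopologicalSpace.SeparableSpace H] [MeasurableSpace H] [BorelSpace H]
  {Ω : Type*} [MeasurableSpace Ω] {ℙ : Measure Ω} [IsProbabilityMeasure ℙ]

lemma traceNorm_cov_le {X : Ω → H} (hXm : Measurable X)
    (hX2 : Integrable (fun ω => ‖X ω‖ ^ 2) ℙ) {B : H →L[ℝ] H}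
    (hB : ∀ u : H, B u = ∫ ω, ⟪u, X ω⟫_ℝ • X ω ∂ℙ) :
    traceNorm B ≤ ENNReal.ofReal (∫ ω, ‖X ω‖ ^ 2 ∂ℙ) := by
  classical
  haveI : SecondCountableTopology H := UniformSpace.secondCountable_of_separable H
  have hXae : AEStronglyMeasurable X ℙ := hXm.aestronglyMeasurable
  have hBc : IsCompactOperator B := cov_isCompactOperator hXm hX2 hB
  have hBs : ∀ x y : H, ⟪B x, y⟫_ℝ = ⟪x, B y⟫_ℝ := cov_symm hXae hX2 hB
  obtain ⟨lam, e, heig, hunit, hzero, horth, hsval⟩ := exists_spectral_seq hBc hBs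
  calc traceNorm B = ∑' i : ℕ, ENNReal.ofReal (sval B (i + 1)) := rfl
  _ ≤ ∑' i : ℕ, ENNReal.ofReal |lam i| :=
      ENNReal.tsum_le_tsum (fun i => ENNReal.ofReal_le_ofReal (hsval i))
  _ ≤ ENNReal.ofReal (∫ ω, ‖X ω‖ ^ 2 ∂ℙ) := by
      rw [ENNReal.tsum_eq_iSup_sum]
      refine iSup_le (fun F => ?_)
      rw [← ENNReal.ofReal_sum_of_nonneg (fun i _ => abs_nonneg _)]
      refine ENNReal.ofReal_le_ofReal ?_
      set F' := F.filter (fun n => lam n ≠ 0) with hF'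
      have hsum_eq : ∑ i ∈ F', |lam i| = ∑ i ∈ F, |lam i| :=
        Finset.sum_filter_of_ne (fun n _ h => abs_ne_zero.1 h)
      rw [← hsum_eq]
      have hlam_eq : ∀ n ∈ F', lam n = ∫ ω, ⟪e n, X ω⟫_ℝ ^ 2 ∂ℙ := by
        intro n hn
        have hne : lam n ≠ 0 := (Finset.mem_filter.1 hn).2
        have h1 : ⟪e n, B (e n)⟫_ℝ = ∫ ω, ⟪e n, X ω⟫_ℝ * ⟪e n, X ω⟫_ℝ ∂ℙ :=
          inner_cov_eq hXae hX2 hB (e n) (e n)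
        have h2 : ⟪e n, B (e n)⟫_ℝ = lam n := by
          rw [heig n, real_inner_smul_right, real_inner_self_eq_norm_sq, hunit n hne]
          ring
        rw [← h2, h1]
        refine integral_congr_ae (Filter.Eventually.of_forall fun ω => ?_)
        ring
      have hlam_nonneg : ∀ n ∈ F', 0 ≤ lam n := by
        intro n hn
        rw [hlam_eq n hn]
        exact integral_nonneg (fun ω => sq_nonneg _)
      calc ∑ i ∈ F', |lam i| = ∑ i ∈ F', lam i :=
            Finset.sum_congr rfl (fun n hn => abs_of_nonneg (hlam_nonneg n hn))
      _ = ∑ i ∈ F', ∫ ω, ⟪e i, X ω⟫_ℝ ^ 2 ∂ℙ := Finset.sum_congr rfl hlam_eq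
      _ = ∫ ω, ∑ i ∈ F', ⟪e i, X ω⟫_ℝ ^ 2 ∂ℙ :=
            (integral_finset_sum F' (fun i _ => integrable_inner_sq hXae hX2 (e i))).symm
      _ ≤ ∫ ω, ‖X ω‖ ^ 2 ∂ℙ := by
            refine integral_mono (integrable_finset_sum F'
              (fun i _ => integrable_inner_sq hXae hX2 (e i))) hX2 (fun ω => ?_)
            exact bessel_finset (fun n hn => hunit n (Finset.mem_filter.1 hn).2)
              (fun m _ n _ hmn => horth m n hmn) (X ω)

end TraceBound


/-- Let `Z, Z'` be `H`-valued random variables with finite second moments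
and let `B, B'` be their uncentered covariance operators, `B u = 𝔼[⟪u, Z⟫ Z]` and
`B' u = 𝔼[⟪u, Z'⟫ Z']`. Then `B` and `B'` are trace class and
`‖B − B'‖₁ ≤ (𝔼‖Z − Z'‖²)^{1/2} ((𝔼‖Z‖²)^{1/2} + (𝔼‖Z'‖²)^{1/2})`. -/
theorem covariance_trace_norm_lipschitz
    {H : Type*} [NormedAddCommGroup H] [InnerProductSpace ℝ H]
    [CompleteSpace H] [TopologicalSpace.SeparableSpace H]
    [MeasurableSpace H] [BorelSpace H]
    {Ω : Type*} [MeasurableSpace Ω] (ℙ : Measure Ω) [IsProbabilityMeasure ℙ]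
    (Z Z' : Ω → H) (hZm : Measurable Z) (hZ'm : Measurable Z')
    (hZ2 : Integrable (fun ω => ‖Z ω‖ ^ 2) ℙ)
    (hZ'2 : Integrable (fun ω => ‖Z' ω‖ ^ 2) ℙ)
    (B B' : H →L[ℝ] H)
    (hB : ∀ u : H, B u = ∫ ω, ⟪u, Z ω⟫_ℝ • Z ω ∂ℙ)
    (hB' : ∀ u : H, B' u = ∫ ω, ⟪u, Z' ω⟫_ℝ • Z' ω ∂ℙ) :
    traceNorm B ≠ ⊤ ∧ traceNorm B' ≠ ⊤ ∧
    traceNorm (B - B') ≤ ENNReal.ofReal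
      (Real.sqrt (∫ ω, ‖Z ω - Z' ω‖ ^ 2 ∂ℙ) *
        (Real.sqrt (∫ ω, ‖Z ω‖ ^ 2 ∂ℙ) + Real.sqrt (∫ ω, ‖Z' ω‖ ^ 2 ∂ℙ))) := by
  classical
  haveI : SecondCountableTopology H := UniformSpace.secondCountable_of_separable H
  have hZae : AEStronglyMeasurable Z ℙ := hZm.aestronglyMeasurable
  have hZ'ae : AEStronglyMeasurable Z' ℙ := hZ'm.aestronglyMeasurable
  refine ⟨(lt_of_le_of_lt (traceNorm_cov_le hZm hZ2 hB) ENNReal.ofReal_lt_top).ne,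
    (lt_of_le_of_lt (traceNorm_cov_le hZ'm hZ'2 hB') ENNReal.ofReal_lt_top).ne, ?_⟩
  -- data for the difference operator
  have hZp : MemLp Z 2 ℙ := (memLp_two_iff_integrable_sq_norm hZae).2 hZ2
  have hZ'p : MemLp Z' 2 ℙ := (memLp_two_iff_integrable_sq_norm hZ'ae).2 hZ'2
  have hDae : AEStronglyMeasurable (fun ω => Z ω - Z' ω) ℙ := hZae.sub hZ'ae
  have hSae : AEStronglyMeasurable (fun ω => Z ω + Z' ω) ℙ := hZae.add hZ'ae
  have hD2 : Integrable (fun ω => ‖Z ω - Z' ω‖ ^ 2) ℙ :=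
    (memLp_two_iff_integrable_sq_norm hDae).1 (hZp.sub hZ'p)
  have hS2 : Integrable (fun ω => ‖Z ω + Z' ω‖ ^ 2) ℙ :=
    (memLp_two_iff_integrable_sq_norm hSae).1 (hZp.add hZ'p)
  have hBc : IsCompactOperator B := cov_isCompactOperator hZm hZ2 hB
  have hB'c : IsCompactOperator B' := cov_isCompactOperator hZ'm hZ'2 hB'
  have hTc : IsCompactOperator (B - B') := by
    rw [show ⇑(B - B') = ⇑B - ⇑B' from by ext x; simp]
    exact hBc.sub hB'c
  have hTs : ∀ x y : H, ⟪(B - B') x, y⟫_ℝ = ⟪x, (B - B') y⟫_ℝ := by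
    intro x y
    simp only [ContinuousLinearMap.sub_apply, inner_sub_left, inner_sub_right]
    rw [cov_symm hZae hZ2 hB x y, cov_symm hZ'ae hZ'2 hB' x y]
  obtain ⟨lam, e, heig, hunit, hzero, horth, hsval⟩ := exists_spectral_seq hTc hTs
  calc traceNorm (B - B') = ∑' i : ℕ, ENNReal.ofReal (sval (B - B') (i + 1)) := rfl
  _ ≤ ∑' i : ℕ, ENNReal.ofReal |lam i| :=
      ENNReal.tsum_le_tsum (fun i => ENNReal.ofReal_le_ofReal (hsval i))
  _ ≤ ENNReal.ofReal
      (Real.sqrt (∫ ω, ‖Z ω - Z' ω‖ ^ 2 ∂ℙ) *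
        (Real.sqrt (∫ ω, ‖Z ω‖ ^ 2 ∂ℙ) + Real.sqrt (∫ ω, ‖Z' ω‖ ^ 2 ∂ℙ))) := by
      rw [ENNReal.tsum_eq_iSup_sum]
      refine iSup_le (fun F => ?_)
      rw [← ENNReal.ofReal_sum_of_nonneg (fun i _ => abs_nonneg _)]
      refine ENNReal.ofReal_le_ofReal ?_
      set F' := F.filter (fun n => lam n ≠ 0) with hF'
      have hsum_eq : ∑ i ∈ F', |lam i| = ∑ i ∈ F, |lam i| :=
        Finset.sum_filter_of_ne (fun n _ h => abs_ne_zero.1 h)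
      rw [← hsum_eq]
      -- identify the eigenvalues
      have hlam_eq : ∀ n ∈ F',
          lam n = ∫ ω, (⟪e n, Z ω⟫_ℝ ^ 2 - ⟪e n, Z' ω⟫_ℝ ^ 2) ∂ℙ := by
        intro n hn
        have hne : lam n ≠ 0 := (Finset.mem_filter.1 hn).2
        have h2 : ⟪e n, (B - B') (e n)⟫_ℝ = lam n := by
          rw [heig n, real_inner_smul_right, real_inner_self_eq_norm_sq, hunit n hne]
          ring
        have h3 : ⟪e n, (B - B') (e n)⟫_ℝ
            = (∫ ω, ⟪e n, Z ω⟫_ℝ ^ 2 ∂ℙ) - ∫ ω, ⟪e n, Z' ω⟫_ℝ ^ 2 ∂ℙ := by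
          rw [ContinuousLinearMap.sub_apply, inner_sub_right,
            inner_cov_eq hZae hZ2 hB (e n) (e n), inner_cov_eq hZ'ae hZ'2 hB' (e n) (e n)]
          congr 1
          · exact integral_congr_ae (Filter.Eventually.of_forall fun ω => by ring)
          · exact integral_congr_ae (Filter.Eventually.of_forall fun ω => by ring)
        rw [← h2, h3, integral_sub (integrable_inner_sq hZae hZ2 (e n))
          (integrable_inner_sq hZ'ae hZ'2 (e n))]
      -- pointwise product bound integrand
      have hint_prod : ∀ n : ℕ, Integrable
          (fun ω => |⟪e n, Z ω - Z' ω⟫_ℝ| * |⟪e n, Z ω + Z' ω⟫_ℝ|) ℙ := by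
        intro n
        have hm1 : AEStronglyMeasurable (fun ω => ⟪e n, Z ω - Z' ω⟫_ℝ) ℙ :=
          aestronglyMeasurable_const.inner hDae
        have hm2 : AEStronglyMeasurable (fun ω => ⟪e n, Z ω + Z' ω⟫_ℝ) ℙ :=
          aestronglyMeasurable_const.inner hSae
        have hm : AEStronglyMeasurable
            (fun ω => |⟪e n, Z ω - Z' ω⟫_ℝ| * |⟪e n, Z ω + Z' ω⟫_ℝ|) ℙ := by
          have := hm1.norm.mul hm2.norm
          simpa [Real.norm_eq_abs, Pi.mul_def] using this
        refine Integrable.mono'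
          ((integrable_norm_mul hDae hSae hD2 hS2).const_mul (‖e n‖ * ‖e n‖)) hm ?_
        filter_upwards with ω
        rw [Real.norm_eq_abs, abs_of_nonneg (by positivity)]
        have h4 := abs_real_inner_le_norm (e n) (Z ω - Z' ω)
        have h5 := abs_real_inner_le_norm (e n) (Z ω + Z' ω)
        have h6 := abs_nonneg ⟪e n, Z ω - Z' ω⟫_ℝ
        have h7 := abs_nonneg ⟪e n, Z ω + Z' ω⟫_ℝ
        have h8 := norm_nonneg (Z ω - Z' ω)
        have h9 := norm_nonneg (e n)
        nlinarith
      calc ∑ i ∈ F', |lam i|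
          ≤ ∑ i ∈ F', ∫ ω, |⟪e i, Z ω - Z' ω⟫_ℝ| * |⟪e i, Z ω + Z' ω⟫_ℝ| ∂ℙ := by
            refine Finset.sum_le_sum (fun n hn => ?_)
            rw [hlam_eq n hn]
            have h10 : ∀ ω, |⟪e n, Z ω⟫_ℝ ^ 2 - ⟪e n, Z' ω⟫_ℝ ^ 2|
                = |⟪e n, Z ω - Z' ω⟫_ℝ| * |⟪e n, Z ω + Z' ω⟫_ℝ| := by
              intro ω
              rw [← abs_mul]
              congr 1
              rw [inner_sub_right, inner_add_right]
              ring
            calc |∫ ω, (⟪e n, Z ω⟫_ℝ ^ 2 - ⟪e n, Z' ω⟫_ℝ ^ 2) ∂ℙ|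
                ≤ ∫ ω, |⟪e n, Z ω⟫_ℝ ^ 2 - ⟪e n, Z' ω⟫_ℝ ^ 2| ∂ℙ := by
                  have := norm_integral_le_integral_norm
                    (fun ω => ⟪e n, Z ω⟫_ℝ ^ 2 - ⟪e n, Z' ω⟫_ℝ ^ 2) (μ := ℙ)
                  simpa [Real.norm_eq_abs] using this
            _ = ∫ ω, |⟪e n, Z ω - Z' ω⟫_ℝ| * |⟪e n, Z ω + Z' ω⟫_ℝ| ∂ℙ :=
                  integral_congr_ae (Filter.Eventually.of_forall fun ω => h10 ω)
      _ = ∫ ω, ∑ i ∈ F', |⟪e i, Z ω - Z' ω⟫_ℝ| * |⟪e i, Z ω + Z' ω⟫_ℝ| ∂ℙ :=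
            (integral_finset_sum F' (fun i _ => hint_prod i)).symm
      _ ≤ ∫ ω, ‖Z ω - Z' ω‖ * ‖Z ω + Z' ω‖ ∂ℙ := by
            refine integral_mono (integrable_finset_sum F' (fun i _ => hint_prod i))
              (integrable_norm_mul hDae hSae hD2 hS2) (fun ω => ?_)
            exact abs_inner_mul_inner_sum_le
              (fun n hn => hunit n (Finset.mem_filter.1 hn).2)
              (fun m _ n _ hmn => horth m n hmn) (Z ω - Z' ω) (Z ω + Z' ω)
      _ ≤ Real.sqrt (∫ ω, ‖Z ω - Z' ω‖ ^ 2 ∂ℙ) * Real.sqrt (∫ ω, ‖Z ω + Z' ω‖ ^ 2 ∂ℙ) :=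
            integral_norm_mul_le hDae hSae hD2 hS2
      _ ≤ Real.sqrt (∫ ω, ‖Z ω - Z' ω‖ ^ 2 ∂ℙ) *
            (Real.sqrt (∫ ω, ‖Z ω‖ ^ 2 ∂ℙ) + Real.sqrt (∫ ω, ‖Z' ω‖ ^ 2 ∂ℙ)) := by
            refine mul_le_mul_of_nonneg_left ?_ (Real.sqrt_nonneg _)
            exact sqrt_integral_add_le hZae hZ'ae hZ2 hZ'2
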